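/- Let φ, φ̂, ψ ∈ V and let w : ℝ → V be differentiable on [0,T] with w'(t) + A w(t) = φ for t ∈ [0,T], w(0) = φ̂ and w(T) = ψ. Let (φ^k)_{k∈ℕ} in V and functions w^k : ℝ → V be such that for every k: w^k is differentiable on [0,T] with differentiable derivative, (w^k)'(t) + A w^k(t) = φ^k for t ∈ [0,T], w^k(0) = φ̂, and φ^{k+1} = (w^k)'(T) + A ψ. Then for every k ∈ ℕ, ‖φ^{k+1} − φ‖ ≤ exp(−δ T) · ‖φ^k − φ‖. -/
import Mathlib
open RealInnerProductSpace

lemma decay_aux {V : Type*} [NormedAddCommGroup V] [InnerProductSpace ℝ V]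
    (A : V →L[ℝ] V) (δ T : ℝ) (hδ : 0 < δ) (hT : 0 < T)
    (hcoer : ∀ v : V, δ * ‖v‖ ^ 2 ≤ ⟪A v, v⟫)
    (u : ℝ → V) (hu : ∀ t ∈ Set.Icc (0:ℝ) T, HasDerivAt u (-(A (u t))) t) :
    ‖u T‖ ≤ Real.exp (-δ * T) * ‖u 0‖ := by
  set g : ℝ → V := fun t => Real.exp (δ * t) • u t with hg
  have hgderiv : ∀ t ∈ Set.Icc (0:ℝ) T,
      HasDerivAt g (Real.exp (δ * t) • (-(A (u t))) + (Real.exp (δ * t) * δ) • u t) t := by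
    intro t ht
    have hlin : HasDerivAt (fun s => δ * s) δ t := by
      simpa using (hasDerivAt_id t).const_mul δ
    have hc : HasDerivAt (fun s => Real.exp (δ * s)) (Real.exp (δ * t) * δ) t := hlin.exp
    exact hc.smul (hu t ht)
  set f : ℝ → ℝ := fun t => ⟪g t, g t⟫ with hf
  have hfderiv : ∀ t ∈ Set.Icc (0:ℝ) T, HasDerivAt f
      (⟪g t, Real.exp (δ * t) • (-(A (u t))) + (Real.exp (δ * t) * δ) • u t⟫ +
       ⟪Real.exp (δ * t) • (-(A (u t))) + (Real.exp (δ * t) * δ) • u t, g t⟫) t := by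
    intro t ht
    exact (hgderiv t ht).inner ℝ (hgderiv t ht)
  have hval : ∀ t ∈ Set.Icc (0:ℝ) T,
      (⟪g t, Real.exp (δ * t) • (-(A (u t))) + (Real.exp (δ * t) * δ) • u t⟫ +
       ⟪Real.exp (δ * t) • (-(A (u t))) + (Real.exp (δ * t) * δ) • u t, g t⟫) ≤ 0 := by
    intro t ht
    have h1 := hcoer (u t)
    have hpos : (0:ℝ) < Real.exp (δ * t) := Real.exp_pos _
    simp only [hg, inner_add_left, inner_add_right, inner_smul_left, inner_smul_right,
      inner_neg_left, inner_neg_right, real_inner_self_eq_norm_sq, RCLike.conj_to_real]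
    have h2 : ⟪u t, A (u t)⟫ = ⟪A (u t), u t⟫ := real_inner_comm _ _
    nlinarith [sq_nonneg (Real.exp (δ * t))]
  have hanti : AntitoneOn f (Set.Icc 0 T) := by
    apply antitoneOn_of_deriv_nonpos (convex_Icc 0 T)
    · exact fun t ht => ((hfderiv t ht).continuousAt).continuousWithinAt
    · intro t ht
      rw [interior_Icc] at ht
      exact (hfderiv t (Set.mem_Icc_of_Ioo ht)).differentiableAt.differentiableWithinAt
    · intro t ht
      rw [interior_Icc] at ht
      rw [(hfderiv t (Set.mem_Icc_of_Ioo ht)).deriv]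
      exact hval t (Set.mem_Icc_of_Ioo ht)
  have hfT : f T ≤ f 0 :=
    hanti (Set.left_mem_Icc.2 hT.le) (Set.right_mem_Icc.2 hT.le) hT.le
  have hg0 : g 0 = u 0 := by simp [hg]
  have hkey : (Real.exp (δ * T) * ‖u T‖) ^ 2 ≤ ‖u 0‖ ^ 2 := by
    have := hfT
    simp only [hf, real_inner_self_eq_norm_sq, hg0, hg, norm_smul, Real.norm_eq_abs,
      abs_of_pos (Real.exp_pos _), mul_zero, Real.exp_zero, one_mul] at this
    nlinarith
  have h2 : Real.exp (δ * T) * ‖u T‖ ≤ ‖u 0‖ := by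
    have h0 : (0:ℝ) ≤ Real.exp (δ * T) * ‖u T‖ := by positivity
    nlinarith [norm_nonneg (u 0)]
  have hpos : (0:ℝ) < Real.exp (δ * T) := Real.exp_pos _
  rw [neg_mul, Real.exp_neg, inv_mul_eq_div, le_div_iff₀ hpos]
  nlinarith

/-- Semi-discrete iterative identification of the constant right-hand side `φ` of
`w' + A w = φ` from the final overdetermination `w(T) = ψ`: each iteration
contracts the error with factor `exp(-δ T)`. -/
theorem stmt_6 {V : Type*} [NormedAddCommGroup V] [InnerProductSpace ℝ V]
    [FiniteDimensional ℝ V]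
    (A : V →L[ℝ] V) (hA : ∀ x y : V, ⟪A x, y⟫ = ⟪x, A y⟫)
    (δ : ℝ) (hδ : 0 < δ) (hcoer : ∀ v : V, δ * ‖v‖ ^ 2 ≤ ⟪A v, v⟫)
    (T : ℝ) (hT : 0 < T)
    (φ φhat ψ : V) (w : ℝ → V)
    (hwdiff : ∀ t ∈ Set.Icc (0 : ℝ) T, DifferentiableAt ℝ w t)
    (hweq : ∀ t ∈ Set.Icc (0 : ℝ) T, deriv w t + A (w t) = φ)
    (hw0 : w 0 = φhat) (hwT : w T = ψ)
    (φs : ℕ → V) (ws : ℕ → ℝ → V)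
    (hsdiff : ∀ k : ℕ, ∀ t ∈ Set.Icc (0 : ℝ) T, DifferentiableAt ℝ (ws k) t)
    (hsdiff2 : ∀ k : ℕ, ∀ t ∈ Set.Icc (0 : ℝ) T, DifferentiableAt ℝ (deriv (ws k)) t)
    (hseq : ∀ k : ℕ, ∀ t ∈ Set.Icc (0 : ℝ) T, deriv (ws k) t + A (ws k t) = φs k)
    (hs0 : ∀ k : ℕ, ws k 0 = φhat)
    (hiter : ∀ k : ℕ, φs (k + 1) = deriv (ws k) T + A ψ) :
    ∀ k : ℕ, ‖φs (k + 1) - φ‖ ≤ Real.exp (-δ * T) * ‖φs k - φ‖ := by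
  intro k
  set e : V := φs k - φ with he
  set v : ℝ → V := fun t => ws k t - w t with hv
  set u : ℝ → V := fun t => e - A (v t) with hu
  have h0T : (0:ℝ) ∈ Set.Icc (0:ℝ) T := Set.left_mem_Icc.2 hT.le
  have hTT : T ∈ Set.Icc (0:ℝ) T := Set.right_mem_Icc.2 hT.le
  have hd1 : ∀ t ∈ Set.Icc (0:ℝ) T, deriv (ws k) t = φs k - A (ws k t) :=
    fun t ht => eq_sub_of_add_eq (hseq k t ht)
  have hd2 : ∀ t ∈ Set.Icc (0:ℝ) T, deriv w t = φ - A (w t) :=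
    fun t ht => eq_sub_of_add_eq (hweq t ht)
  have huderiv : ∀ t ∈ Set.Icc (0:ℝ) T, HasDerivAt u (-(A (u t))) t := by
    intro t ht
    have hv' : HasDerivAt v (u t) t := by
      have h := ((hsdiff k t ht).hasDerivAt).sub ((hwdiff t ht).hasDerivAt)
      have : deriv (ws k) t - deriv w t = u t := by
        rw [hd1 t ht, hd2 t ht]
        simp only [hu, hv, he, map_sub]
        abel
      rwa [this] at h
    have hAv : HasDerivAt (fun s => A (v s)) (A (u t)) t :=
      A.hasFDerivAt.comp_hasDerivAt t hv'
    simpa using hAv.const_sub e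
  have hu0 : u 0 = e := by
    simp [hu, hv, hs0 k, hw0]
  have huT : φs (k + 1) - φ = u T := by
    rw [hiter k, hd1 T hTT]
    simp only [hu, hv, he, map_sub, hwT]
    abel
  rw [huT, ← hu0]
  exact decay_aux A δ T hδ hT hcoer u huderiv
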